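/- Let K be a real quadratic field with discriminant D. Then there exists an algebraic integer α ∈ K with K = ℚ(α) and H(α) < √D. -/

import Mathlib

open NumberField IntermediateField Polynomial

section Aux

lemma aux_quad_eq {R : Type*} [CommRing R] {p : R[X]} (hm : p.Monic) (hd : p.natDegree = 2) :
    p = X ^ 2 + C (p.coeff 1) * X + C (p.coeff 0) := by
  ext i
  match i with
  | 0 => simp
  | 1 => simp [coeff_X_pow]
  | 2 =>
    simp only [coeff_add, coeff_X_pow, if_pos rfl, coeff_C_mul, coeff_X, coeff_C]
    norm_num
    rw [← hd]
    exact hm.coeff_natDegree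
  | (k + 3) =>
    rw [p.coeff_eq_zero_of_natDegree_lt (by omega)]
    have h2 : ¬(k + 3 = 2) := by omega
    have h1 : ¬(k + 3 = 1) := by omega
    have h0 : ¬(k + 3 = 0) := by omega
    simp [coeff_X_pow, coeff_C, h0, h1, h2]

variable {K : Type*} [Field K] [NumberField K]

lemma aux_gen_top (hdeg : Module.finrank ℚ K = 2) {x : K}
    (hx : x ∉ (⊥ : IntermediateField ℚ K)) : ℚ⟮x⟯ = ⊤ := by
  have h1 : ℚ⟮x⟯ ≠ ⊥ := fun h => hx (h ▸ IntermediateField.mem_adjoin_simple_self ℚ x)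
  have hdvd : Module.finrank ℚ (ℚ⟮x⟯ : IntermediateField ℚ K) ∣ 2 := by
    rw [← hdeg]
    exact ⟨Module.finrank (ℚ⟮x⟯ : IntermediateField ℚ K) K,
      (Module.finrank_mul_finrank ℚ (ℚ⟮x⟯ : IntermediateField ℚ K) K).symm⟩
  rcases (Nat.dvd_prime Nat.prime_two).1 hdvd with h | h
  · exact absurd (IntermediateField.finrank_eq_one_iff.1 h) h1
  · refine IntermediateField.eq_of_le_of_finrank_le le_top ?_
    rw [IntermediateField.finrank_top', hdeg, h]

lemma aux_minpoly_natDegree (hdeg : Module.finrank ℚ K = 2) {x : K}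
    (hint : IsIntegral ℤ x) (hx : x ∉ (⊥ : IntermediateField ℚ K)) :
    (minpoly ℤ x).natDegree = 2 := by
  have hmap : (minpoly ℤ x).map (algebraMap ℤ ℚ) = minpoly ℚ x :=
    (minpoly.isIntegrallyClosed_eq_field_fractions' ℚ hint).symm
  have h1 : (minpoly ℤ x).natDegree = (minpoly ℚ x).natDegree := by
    rw [← hmap, (minpoly.monic hint).natDegree_map]
  rw [h1, ← IntermediateField.adjoin.finrank (IsIntegral.tower_top (A := ℚ) hint),
    aux_gen_top hdeg hx, IntermediateField.finrank_top', hdeg]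

/-- There is a `ℤ`-basis of `𝓞 K` of the form `(1, θ)`. -/
lemma aux_basis (hdeg : Module.finrank ℚ K = 2) :
    ∃ θ : 𝓞 K, Nonempty { b : Module.Basis (Fin 2) ℤ (𝓞 K) // b 0 = 1 ∧ b 1 = θ } := by
  have hrank : Module.finrank ℤ (𝓞 K) = 2 := by
    rw [RingOfIntegers.rank, hdeg]
  let e0 := Module.Free.chooseBasis ℤ (𝓞 K)
  have hcard : Fintype.card (Module.Free.ChooseBasisIndex ℤ (𝓞 K)) = 2 := by
    rw [← Module.finrank_eq_card_chooseBasisIndex, hrank]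
  let e : Module.Basis (Fin 2) ℤ (𝓞 K) := e0.reindex (Fintype.equivFinOfCardEq hcard)
  set a : ℤ := e.repr 1 0 with ha
  set c : ℤ := e.repr 1 1 with hc
  have hone : a • e 0 + c • e 1 = 1 := by
    have := e.sum_repr 1
    rwa [Fin.sum_univ_two] at this
  have hcop : IsCoprime a c := by
    rw [Int.isCoprime_iff_gcd_eq_one]
    by_contra hg
    set g : ℕ := Int.gcd a c with hgdef
    have hgdvd_a : (g : ℤ) ∣ a := Int.gcd_dvd_left a c
    have hgdvd_c : (g : ℤ) ∣ c := Int.gcd_dvd_right a c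
    obtain ⟨a', ha'⟩ := hgdvd_a
    obtain ⟨c', hc'⟩ := hgdvd_c
    have hgne : g ≠ 0 := by
      intro h0
      rw [h0] at hgdef
      obtain ⟨ha0, hc0⟩ := Int.gcd_eq_zero_iff.1 hgdef.symm
      rw [ha0, hc0] at hone
      simp at hone
    set y : 𝓞 K := a' • e 0 + c' • e 1 with hy
    have hgy : (g : ℤ) • y = 1 := by
      rw [hy, smul_add, smul_smul, smul_smul, ← ha', ← hc', hone]
    have hyK : (algebraMap (𝓞 K) K) y = algebraMap ℚ K (1 / (g : ℚ)) := by
      have hgK : ((g : ℤ) : K) * (algebraMap (𝓞 K) K) y = 1 := by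
        have := congrArg (algebraMap (𝓞 K) K) hgy
        rwa [map_zsmul, zsmul_eq_mul, map_one] at this
      rw [map_div₀, map_one, map_natCast,
        eq_div_iff ((Nat.cast_ne_zero (R := K)).2 hgne), mul_comm]
      push_cast at hgK ⊢
      exact hgK
    have hyint : IsIntegral ℤ ((algebraMap (𝓞 K) K) y) := RingOfIntegers.isIntegral_coe y
    rw [hyK] at hyint
    have : IsIntegral ℤ (1 / (g : ℚ)) :=
      (isIntegral_algebraMap_iff (algebraMap ℚ K).injective).1 hyint
    obtain ⟨z, hz⟩ := IsIntegrallyClosed.isIntegral_iff.1 this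
    have hzg : z * (g : ℤ) = 1 := by
      have : (z : ℚ) * (g : ℚ) = 1 := by
        rw [show (z : ℚ) = algebraMap ℤ ℚ z from rfl, hz]
        field_simp
      exact_mod_cast this
    have : g = 1 := by
      have := Int.eq_one_of_mul_eq_one_left (by positivity) hzg
      omega
    exact hg this
  obtain ⟨u, v, huv⟩ := hcop
  set θ : 𝓞 K := (-v) • e 0 + u • e 1 with hθ
  have hli : LinearIndependent ℤ ![(1 : 𝓞 K), θ] := by
    rw [LinearIndependent.pair_iff]
    intro s t hst
    have hexp : s • (1 : 𝓞 K) + t • θ = (s * a - t * v) • e 0 + (s * c + t * u) • e 1 := by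
      rw [← hone, hθ]; module
    rw [hexp] at hst
    have h2 : ∀ i, ![s * a - t * v, s * c + t * u] i = 0 := by
      apply Fintype.linearIndependent_iff.1 e.linearIndependent
      rw [Fin.sum_univ_two]
      simpa using hst
    have e1 := h2 0
    have e2 := h2 1
    simp only [Matrix.cons_val_zero, Matrix.cons_val_one, Matrix.head_cons] at e1 e2
    constructor
    · linear_combination u * e1 + v * e2 - s * huv
    · linear_combination a * e2 - c * e1 - t * huv
  have hsp : ⊤ ≤ Submodule.span ℤ (Set.range ![(1 : 𝓞 K), θ]) := by
    rw [← e.span_eq]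
    refine Submodule.span_le.2 ?_
    rintro x ⟨i, rfl⟩
    have h1m : (1 : 𝓞 K) ∈ Submodule.span ℤ (Set.range ![(1 : 𝓞 K), θ]) :=
      Submodule.subset_span ⟨0, rfl⟩
    have hθm : θ ∈ Submodule.span ℤ (Set.range ![(1 : 𝓞 K), θ]) :=
      Submodule.subset_span ⟨1, rfl⟩
    fin_cases i
    · have he0 : u • (1 : 𝓞 K) + (-c) • θ = (u * a + v * c) • e 0 := by
        rw [← hone, hθ]; module
      have : e 0 = u • (1 : 𝓞 K) + (-c) • θ := by rw [he0, huv, one_smul]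
      rw [show (⟨0, by omega⟩ : Fin 2) = 0 from rfl, this]
      exact Submodule.add_mem _ (Submodule.smul_mem _ _ h1m) (Submodule.smul_mem _ _ hθm)
    · have he1 : v • (1 : 𝓞 K) + a • θ = (u * a + v * c) • e 1 := by
        rw [← hone, hθ]; module
      have : e 1 = v • (1 : 𝓞 K) + a • θ := by rw [he1, huv, one_smul]
      rw [show (⟨1, by omega⟩ : Fin 2) = 1 from rfl, this]
      exact Submodule.add_mem _ (Submodule.smul_mem _ _ h1m) (Submodule.smul_mem _ _ hθm)
  exact ⟨θ, ⟨⟨Module.Basis.mk hli hsp, by simp, by simp⟩⟩⟩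

lemma aux_discr (b : Module.Basis (Fin 2) ℤ (𝓞 K)) (θ : 𝓞 K) (hb0 : b 0 = 1) (hb1 : b 1 = θ)
    (t n : ℤ) (hrel : θ * θ = (-n) • (1 : 𝓞 K) + (-t) • θ) :
    NumberField.discr K = t ^ 2 - 4 * n := by
  rw [← NumberField.discr_eq_discr K b]
  have hrepr : ∀ (x y : ℤ) (i : Fin 2), b.repr (x • (1 : 𝓞 K) + y • θ) i = ![x, y] i := by
    intro x y i
    rw [← hb0, ← hb1, map_add, map_smul, map_smul, b.repr_self, b.repr_self]
    fin_cases i <;> simp [Finsupp.single_apply]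
  have r10 : b.repr (1 : 𝓞 K) 0 = 1 := by simpa using hrepr 1 0 0
  have rθ1 : b.repr θ 1 = 1 := by simpa using hrepr 0 1 1
  have rθ0 : b.repr θ 0 = 0 := by simpa using hrepr 0 1 0
  have rθθ0 : b.repr (θ * θ) 0 = -n := by rw [hrel]; simpa using hrepr (-n) (-t) 0
  have rθθ1 : b.repr (θ * θ) 1 = -t := by rw [hrel]; simpa using hrepr (-n) (-t) 1
  have h3 : θ * θ * θ = (t * n) • (1 : 𝓞 K) + (t ^ 2 - n) • θ := by
    rw [hrel, add_mul, smul_mul_assoc, smul_mul_assoc, one_mul, hrel]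
    module
  have rθ31 : b.repr (θ * θ * θ) 1 = t ^ 2 - n := by
    rw [h3, hrepr]
    simp
  have tr : ∀ x : 𝓞 K, Algebra.trace ℤ (𝓞 K) x = b.repr (x * b 0) 0 + b.repr (x * b 1) 1 := by
    intro x
    rw [Algebra.trace_eq_matrix_trace b, Matrix.trace_fin_two,
      Algebra.leftMulMatrix_eq_repr_mul, Algebra.leftMulMatrix_eq_repr_mul]
  have tr1 : Algebra.trace ℤ (𝓞 K) (1 : 𝓞 K) = 2 := by
    rw [tr, hb0, hb1, one_mul, one_mul, r10, rθ1]
    norm_num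
  have trθ : Algebra.trace ℤ (𝓞 K) θ = -t := by
    rw [tr, hb0, hb1, mul_one, rθ0, rθθ1, zero_add]
  have trθ2 : Algebra.trace ℤ (𝓞 K) (θ * θ) = t ^ 2 - 2 * n := by
    rw [tr, hb0, hb1, mul_one, rθθ0, rθ31]
    ring
  rw [Algebra.discr_def, Matrix.det_fin_two]
  simp only [Algebra.traceMatrix_apply, Algebra.traceForm_apply, hb0, hb1, one_mul, mul_one]
  rw [tr1, trθ, trθ2]
  ring

end Aux

set_option maxHeartbeats 1000000 in
/-- Every real quadratic field `K` of discriminant `D` has an algebraic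
integer generator `α` with `H(α) < √D`. Here the minimal polynomial of the integral
element `α` is the monic quadratic `x² + b·x + c` with `b, c ∈ ℤ`, and
`H(α) = max(1, |b|, |c|)`. -/
theorem real_quadratic_small_integral_generator
    (K : Type*) [Field K] [NumberField K]
    (hdeg : Module.finrank ℚ K = 2)
    (hD : 0 < NumberField.discr K) :
    ∃ α : K, IsIntegral ℤ α ∧ ℚ⟮α⟯ = ⊤ ∧
      ((max 1 (max |(minpoly ℤ α).coeff 1| |(minpoly ℤ α).coeff 0|) : ℤ) : ℝ) <
        Real.sqrt (NumberField.discr K : ℝ) := by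
  obtain ⟨θ, ⟨⟨b, hb0, hb1⟩⟩⟩ := aux_basis hdeg
  set θK : K := algebraMap (𝓞 K) K θ with hθKdef
  have hθint : IsIntegral ℤ θK := RingOfIntegers.isIntegral_coe θ
  -- θ is not rational
  have hθnb : θK ∉ (⊥ : IntermediateField ℚ K) := by
    intro hmem
    rw [IntermediateField.mem_bot] at hmem
    obtain ⟨q, hq⟩ := hmem
    have hqint : IsIntegral ℤ q :=
      (isIntegral_algebraMap_iff (algebraMap ℚ K).injective).1 (hq ▸ hθint)
    obtain ⟨z, hz⟩ := IsIntegrallyClosed.isIntegral_iff.1 hqint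
    have hθz : θ = (z : 𝓞 K) := by
      apply RingOfIntegers.coe_injective (K := K)
      rw [map_intCast, ← hθKdef, ← hq, ← hz]
      simp
    have h1 : b.repr θ 1 = 1 := by rw [← hb1, b.repr_self]; simp
    have h2 : b.repr θ 1 = 0 := by
      rw [hθz, show ((z : 𝓞 K)) = z • (1 : 𝓞 K) by simp [zsmul_eq_mul], ← hb0, map_smul,
        b.repr_self]
      simp [Finsupp.single_apply]
    rw [h1] at h2
    exact one_ne_zero h2
  -- minimal polynomial of θ
  set t : ℤ := (minpoly ℤ θK).coeff 1 with ht
  set n : ℤ := (minpoly ℤ θK).coeff 0 with hn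
  have hpd : (minpoly ℤ θK).natDegree = 2 := aux_minpoly_natDegree hdeg hθint hθnb
  have hpm : (minpoly ℤ θK).Monic := minpoly.monic hθint
  have haev : θK ^ 2 + (t : K) * θK + (n : K) = 0 := by
    have h := minpoly.aeval ℤ θK
    rw [aux_quad_eq hpm hpd] at h
    simpa using h
  have hrel : θ * θ = (-n : ℤ) • (1 : 𝓞 K) + (-t : ℤ) • θ := by
    apply RingOfIntegers.coe_injective (K := K)
    push_cast [map_add, map_mul, map_zsmul, map_one]
    rw [zsmul_eq_mul, zsmul_eq_mul]
    push_cast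
    linear_combination haev
  set D : ℤ := NumberField.discr K with hDdef
  have hD4 : D = t ^ 2 - 4 * n := aux_discr b θ hb0 hb1 t n hrel
  -- integer square root of D
  set s : ℤ := (Nat.sqrt D.toNat : ℤ) with hsdef
  have hDt : (D.toNat : ℤ) = D := Int.toNat_of_nonneg hD.le
  have hs0 : 0 ≤ s := Int.natCast_nonneg _
  have hs2 : s ^ 2 ≤ D := by
    rw [← hDt, hsdef]
    exact_mod_cast Nat.sqrt_le' D.toNat
  have hDlt : D < (s + 1) ^ 2 := by
    rw [← hDt, hsdef]
    exact_mod_cast Nat.lt_succ_sqrt' D.toNat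
  have hs1 : 1 ≤ s := by nlinarith
  -- the shift
  set B : ℤ := if Even (s - t) then s else s - 1 with hBdef
  have hBs : B = s ∨ B = s - 1 := by
    rw [hBdef]; split_ifs <;> simp
  have hpar : Even (B - t) := by
    rw [hBdef]
    split_ifs with h
    · exact h
    · rcases Int.even_or_odd (s - t) with h' | h'
      · exact absurd h' h
      · obtain ⟨m, hm⟩ := h'
        exact ⟨m, by omega⟩
  set k : ℤ := (B - t) / 2 with hkdef
  have hk2 : t + 2 * k = B := by
    obtain ⟨m, hm⟩ := hpar
    omega
  set Cc : ℤ := n + t * k + k * k with hCcdef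
  set α : K := θK - (k : K) with hαdef
  have hαO : α = algebraMap (𝓞 K) K (θ - (k : 𝓞 K)) := by
    rw [map_sub, map_intCast, hαdef]
  have hαint : IsIntegral ℤ α := by
    rw [hαO]; exact RingOfIntegers.isIntegral_coe _
  have hαnb : α ∉ (⊥ : IntermediateField ℚ K) := by
    intro hmem
    apply hθnb
    have : θK = α + (k : K) := by rw [hαdef]; ring
    rw [this]
    exact add_mem hmem (by
      rw [IntermediateField.mem_bot]
      exact ⟨(k : ℚ), by rw [map_intCast]⟩)
  have hgen : ℚ⟮α⟯ = ⊤ := aux_gen_top hdeg hαnb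
  -- minimal polynomial of α
  have haevα : α ^ 2 + ((t + 2 * k : ℤ) : K) * α + ((Cc : ℤ) : K) = 0 := by
    rw [hαdef, hCcdef]
    push_cast
    linear_combination haev
  set qp : ℤ[X] := X ^ 2 + C (t + 2 * k) * X + C Cc with hqp
  have hqd : qp.natDegree = 2 := by
    rw [hqp]
    compute_degree!
  have hqm : qp.Monic := by
    rw [Polynomial.Monic, Polynomial.leadingCoeff, hqd, hqp]
    simp only [coeff_add, coeff_X_pow, coeff_C_mul, coeff_C, coeff_X]
    norm_num
  have hqaev : Polynomial.aeval α qp = 0 := by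
    rw [hqp, map_add, map_add, map_mul, map_pow, aeval_X, aeval_C, aeval_C,
      eq_intCast, eq_intCast]
    exact haevα
  have hmpα : qp = minpoly ℤ α := by
    refine Polynomial.eq_of_monic_of_dvd_of_natDegree_le (minpoly.monic hαint) hqm
      (minpoly.isIntegrallyClosed_dvd hαint hqaev) ?_
    rw [hqd, aux_minpoly_natDegree hdeg hαint hαnb]
  have hc1 : (minpoly ℤ α).coeff 1 = t + 2 * k := by
    rw [← hmpα, hqp]
    simp only [coeff_add, coeff_X_pow, coeff_C_mul, coeff_C, coeff_X]
    norm_num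
  have hc0 : (minpoly ℤ α).coeff 0 = Cc := by
    rw [← hmpα, hqp]
    simp only [coeff_add, coeff_X_pow, coeff_C_mul, coeff_C, coeff_X]
    norm_num
  -- numeric estimates
  have hDB : B ^ 2 - 4 * Cc = D := by
    rw [hCcdef]
    linear_combination (-(B + t + 2 * k)) * hk2 - hD4
  have hB0 : 0 ≤ B := by rcases hBs with h | h <;> omega
  have hBle : B ≤ s := by rcases hBs with h | h <;> omega
  have hB2le : B ^ 2 ≤ D := by nlinarith
  have hCc0 : Cc ≠ 0 := by
    intro h0
    have h := haevα
    push_cast at h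
    have hCcK : ((Cc : ℤ) : K) = 0 := by exact_mod_cast congrArg (fun z : ℤ => (z : K)) h0
    have hv : α * (α + ((t : K) + 2 * (k : K))) = 0 := by
      linear_combination h - hCcK
    rcases mul_eq_zero.1 hv with h' | h'
    · exact hαnb (h' ▸ zero_mem _)
    · apply hαnb
      have hα' : α = ((-(t + 2 * k) : ℤ) : K) := by push_cast; linear_combination h'
      rw [hα']
      exact intCast_mem _ _
  have hB2lt : B ^ 2 < D := by
    rcases lt_or_eq_of_le hB2le with h | h
    · exact h
    · exfalso; apply hCc0; omega
  have hCcneg : Cc < 0 := by omega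
  have hBge : s - 1 ≤ B := by rcases hBs with h | h <;> omega
  have hCltS : -Cc < s := by nlinarith [sq_nonneg (B - s + 1), hDlt, hDB, hBge, hB0, hs1]
  -- real estimates
  have hDR : (0 : ℝ) < (D : ℝ) := by exact_mod_cast hD
  have hsqrtS : (s : ℝ) ≤ Real.sqrt (D : ℝ) := by
    rw [Real.le_sqrt (by exact_mod_cast hs0) hDR.le]
    exact_mod_cast hs2
  have h1lt : (1 : ℝ) < Real.sqrt (D : ℝ) := by
    rw [show (1 : ℝ) = Real.sqrt 1 by simp]
    apply Real.sqrt_lt_sqrt (by norm_num)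
    have : 4 ≤ D := by nlinarith
    exact_mod_cast by linarith
  have hBlt : (|(t + 2 * k : ℤ)| : ℝ) < Real.sqrt (D : ℝ) := by
    rw [hk2, abs_of_nonneg (show (0 : ℝ) ≤ ((B : ℤ) : ℝ) by exact_mod_cast hB0)]
    rw [Real.lt_sqrt (by exact_mod_cast hB0)]
    exact_mod_cast hB2lt
  have hClt : (|Cc| : ℝ) < Real.sqrt (D : ℝ) := by
    have : (|Cc| : ℝ) < (s : ℝ) := by
      rw [abs_of_neg (show ((Cc : ℤ) : ℝ) < 0 by exact_mod_cast hCcneg)]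
      exact_mod_cast hCltS
    linarith
  refine ⟨α, hαint, hgen, ?_⟩
  rw [hc1, hc0]
  push_cast
  push_cast at hBlt hClt
  exact max_lt h1lt (max_lt hBlt hClt)
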